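/- arXiv:2511.19139 — 4 statements merged into one kernel-verified Lean document; each statement's English description precedes it below -/
import Mathlib

section
/- Let γ ∈ SL(2,ℤ) and let k ≥ 1 be an integer. If det(1 - γ^k) = 0 (as a 2×2 integer matrix), then either γ^k = 1, or there exists a nonzero integer m such that γ is conjugate in SL(2,ℤ) to T^m or to -T^m. Moreover, for any δ ∈ SL(2,ℤ), det(1 - δ) = 2 - tr(δ); in particular det(1 - δ) = 0 if and only if tr(δ) = 2. -/
/-- The shear matrix `T = [[1,1],[0,1]]` as an element of `SL(2,ℤ)`. -/
def T : Matrix.SpecialLinearGroup (Fin 2) ℤ :=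
  ⟨!![1, 1; 0, 1], by norm_num [Matrix.det_fin_two_of]⟩

open Matrix

private lemma T_eq_modular : T = ModularGroup.T := rfl

private lemma coe_T_zpow' (n : ℤ) :
    ((T ^ n : Matrix.SpecialLinearGroup (Fin 2) ℤ) : Matrix (Fin 2) (Fin 2) ℤ)
      = !![1, n; 0, 1] := by
  rw [T_eq_modular]; exact ModularGroup.coe_T_zpow n

private lemma eq_one_of_coe_eq_one (X : Matrix.SpecialLinearGroup (Fin 2) ℤ)
    (h : (X : Matrix (Fin 2) (Fin 2) ℤ) = 1) : X = 1 := Subtype.ext h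

/-- An element of `SL(2,ℤ)` with trace `2` which is not `1` is conjugate to `T^n`, `n ≠ 0`. -/
private lemma key (B : Matrix.SpecialLinearGroup (Fin 2) ℤ) (hB : B ≠ 1)
    (htr : Matrix.trace ((B : Matrix (Fin 2) (Fin 2) ℤ)) = 2) :
    ∃ (g : Matrix.SpecialLinearGroup (Fin 2) ℤ) (n : ℤ), n ≠ 0 ∧ g⁻¹ * B * g = T ^ n := by
  set A : Matrix (Fin 2) (Fin 2) ℤ := (B : Matrix (Fin 2) (Fin 2) ℤ) with hA
  set a : ℤ := A 0 0 with ha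
  set b : ℤ := A 0 1 with hb
  set c : ℤ := A 1 0 with hc
  set d : ℤ := A 1 1 with hd
  have hdet : a * d - b * c = 1 := by
    have := B.2; rw [Matrix.det_fin_two] at this; exact this
  have htr' : a + d = 2 := by
    rw [Matrix.trace_fin_two] at htr; exact htr
  have he : (a - 1) * (a - 1) + b * c = 0 := by linear_combination (-1) * hdet + a * htr'
  have hAeta : A = !![a, b; c, d] := Matrix.eta_fin_two A
  have hnt : ¬(a - 1 = 0 ∧ b = 0 ∧ c = 0) := by
    rintro ⟨h1, h2, h3⟩
    apply hB
    apply eq_one_of_coe_eq_one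
    rw [← hA, hAeta]
    have hd1 : d = 1 := by omega
    have ha1 : a = 1 := by omega
    rw [ha1, h2, h3, hd1, Matrix.one_fin_two]
  obtain ⟨p, q, hpq, hk1, hk2⟩ :
      ∃ p q : ℤ, Int.gcd p q = 1 ∧ (a - 1) * p + b * q = 0 ∧ c * p - (a - 1) * q = 0 := by
    by_cases hbe : b = 0 ∧ a - 1 = 0
    · exact ⟨0, 1, by simp, by simp [hbe.1, hbe.2], by simp [hbe.2]⟩
    · have hne : -b ≠ 0 ∨ a - 1 ≠ 0 := by
        rcases not_and_or.mp hbe with h | h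
        · left; omega
        · right; exact h
      set d0 : ℕ := Int.gcd (-b) (a - 1) with hd0
      have hd0pos : 0 < Int.gcd (-b) (a - 1) := Int.gcd_pos_iff.mpr hne
      have hd0ne : (d0 : ℤ) ≠ 0 := by exact_mod_cast hd0pos.ne'
      refine ⟨(-b) / d0, (a - 1) / d0, Int.gcd_div_gcd_div_gcd hd0pos, ?_, ?_⟩
      · have h1 : (d0 : ℤ) * ((-b) / d0) = -b :=
          Int.mul_ediv_cancel' (Int.gcd_dvd_left (-b) (a - 1))
        have h2 : (d0 : ℤ) * ((a - 1) / d0) = a - 1 :=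
          Int.mul_ediv_cancel' (Int.gcd_dvd_right (-b) (a - 1))
        have : (d0 : ℤ) * ((a - 1) * ((-b) / d0) + b * ((a - 1) / d0)) = 0 := by
          linear_combination (a - 1) * h1 + b * h2
        exact (mul_eq_zero.mp this).resolve_left hd0ne
      · have h1 : (d0 : ℤ) * ((-b) / d0) = -b :=
          Int.mul_ediv_cancel' (Int.gcd_dvd_left (-b) (a - 1))
        have h2 : (d0 : ℤ) * ((a - 1) / d0) = a - 1 :=
          Int.mul_ediv_cancel' (Int.gcd_dvd_right (-b) (a - 1))
        have : (d0 : ℤ) * (c * ((-b) / d0) - (a - 1) * ((a - 1) / d0)) = 0 := by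
          linear_combination c * h1 - (a - 1) * h2 - he
        exact (mul_eq_zero.mp this).resolve_left hd0ne
  -- Bezout
  have hbez : (1 : ℤ) = p * Int.gcdA p q + q * Int.gcdB p q := by
    have := Int.gcd_eq_gcd_ab p q
    rw [hpq] at this; exact_mod_cast this
  set s : ℤ := Int.gcdA p q with hs
  set w : ℤ := Int.gcdB p q with hw
  have hbez1 : p * s + q * w = 1 := hbez.symm
  have hgdet : Matrix.det !![p, -w; q, s] = 1 := by
    rw [Matrix.det_fin_two_of]; linear_combination hbez1
  set g : Matrix.SpecialLinearGroup (Fin 2) ℤ := ⟨!![p, -w; q, s], hgdet⟩ with hg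
  have hginv : ((g⁻¹ : Matrix.SpecialLinearGroup (Fin 2) ℤ) : Matrix (Fin 2) (Fin 2) ℤ)
      = !![s, w; -q, p] := by
    rw [Matrix.SpecialLinearGroup.coe_inv]
    show Matrix.adjugate !![p, -w; q, s] = _
    rw [Matrix.adjugate_fin_two]
    norm_num
  have hCmat : ((g⁻¹ * B * g : Matrix.SpecialLinearGroup (Fin 2) ℤ) :
      Matrix (Fin 2) (Fin 2) ℤ) = !![s, w; -q, p] * A * !![p, -w; q, s] := by
    rw [Matrix.SpecialLinearGroup.coe_mul, Matrix.SpecialLinearGroup.coe_mul, hginv, hA]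
  set n : ℤ := (!![s, w; -q, p] * A * !![p, -w; q, s]) 0 1 with hn
  have h00 : (!![s, w; -q, p] * A * !![p, -w; q, s]) 0 0 = 1 := by
    rw [hAeta]
    simp [Matrix.mul_apply, Fin.sum_univ_two]
    linear_combination s * hk1 + w * hk2 + w * q * htr' + hbez1
  have h10 : (!![s, w; -q, p] * A * !![p, -w; q, s]) 1 0 = 0 := by
    rw [hAeta]
    simp [Matrix.mul_apply, Fin.sum_univ_two]
    linear_combination (-q) * hk1 + p * hk2 + p * q * htr'
  have h11 : (!![s, w; -q, p] * A * !![p, -w; q, s]) 1 1 = 1 := by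
    rw [hAeta]
    simp [Matrix.mul_apply, Fin.sum_univ_two]
    linear_combination (-s) * hk1 + (-w) * hk2 + p * s * htr' + hbez1
  have hCform : ((g⁻¹ * B * g : Matrix.SpecialLinearGroup (Fin 2) ℤ) :
      Matrix (Fin 2) (Fin 2) ℤ) = !![1, n; 0, 1] := by
    rw [hCmat]
    ext i j
    fin_cases i <;> fin_cases j
    · simpa using h00
    · simp [hn]
    · simpa using h10
    · simpa using h11
  have hne : n ≠ 0 := by
    intro h0
    apply hB
    have : g⁻¹ * B * g = 1 := by
      apply eq_one_of_coe_eq_one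
      rw [hCform, h0, Matrix.one_fin_two]
    calc B = g * (g⁻¹ * B * g) * g⁻¹ := by group
    _ = g * 1 * g⁻¹ := by rw [this]
    _ = 1 := by group
  refine ⟨g, n, hne, ?_⟩
  apply Subtype.ext
  rw [coe_T_zpow' n]
  exact hCform

/-- Elements commuting with `T^n` (`n ≠ 0`) are `±T^m`. -/
private lemma commT (δ : Matrix.SpecialLinearGroup (Fin 2) ℤ) (n : ℤ) (hn : n ≠ 0)
    (hc : δ * T ^ n = T ^ n * δ) : ∃ m : ℤ, δ = T ^ m ∨ δ = -(T ^ m) := by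
  have hmat : (δ : Matrix (Fin 2) (Fin 2) ℤ) * !![1, n; 0, 1]
      = !![1, n; 0, 1] * (δ : Matrix (Fin 2) (Fin 2) ℤ) := by
    have := congrArg (fun X : Matrix.SpecialLinearGroup (Fin 2) ℤ =>
      (X : Matrix (Fin 2) (Fin 2) ℤ)) hc
    simpa [Matrix.SpecialLinearGroup.coe_mul, coe_T_zpow'] using this
  set α : ℤ := (δ : Matrix (Fin 2) (Fin 2) ℤ) 0 0 with hα
  set β : ℤ := (δ : Matrix (Fin 2) (Fin 2) ℤ) 0 1 with hβ
  set ξ : ℤ := (δ : Matrix (Fin 2) (Fin 2) ℤ) 1 0 with hξ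
  set η : ℤ := (δ : Matrix (Fin 2) (Fin 2) ℤ) 1 1 with hη
  have hdet : α * η - β * ξ = 1 := by
    have := δ.2; rw [Matrix.det_fin_two] at this; exact this
  have e00 := congrFun (congrFun hmat 0) 0
  have e01 := congrFun (congrFun hmat 0) 1
  simp [Matrix.mul_apply, Fin.sum_univ_two, ← hα, ← hβ, ← hξ, ← hη] at e00 e01
  have hξ0 : ξ = 0 := e00.resolve_left hn
  have hαη : α = η := by
    have : n * α = n * η := by linarith
    exact mul_left_cancel₀ hn this
  have hα2 : α * α = 1 := by
    rw [hξ0] at hdet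
    rw [hαη] at hdet ⊢
    linarith
  have hδeta : (δ : Matrix (Fin 2) (Fin 2) ℤ) = !![α, β; ξ, η] :=
    Matrix.eta_fin_two _
  rcases Int.isUnit_iff.mp (IsUnit.of_mul_eq_one _ hα2) with h1 | h1
  · refine ⟨β, Or.inl ?_⟩
    apply Subtype.ext
    rw [coe_T_zpow', hδeta, hξ0, h1, ← hαη, h1]
  · refine ⟨-β, Or.inr ?_⟩
    apply Subtype.ext
    rw [Matrix.SpecialLinearGroup.coe_neg, coe_T_zpow', hδeta, hξ0, h1, ← hαη, h1]
    norm_num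

/-- if `det(1 - γ^k) = 0` then `γ^k = 1` or `γ` is conjugate in `SL(2,ℤ)`
to `T^m` or `-T^m` for some nonzero integer `m`; moreover for any `δ ∈ SL(2,ℤ)` we have
`det(1 - δ) = 2 - tr δ`, so `det(1 - δ) = 0 ↔ tr δ = 2`. -/
theorem stmt1 (γ : Matrix.SpecialLinearGroup (Fin 2) ℤ) (k : ℕ) (hk : 1 ≤ k)
    (h : (1 - ((γ ^ k : Matrix.SpecialLinearGroup (Fin 2) ℤ) :
        Matrix (Fin 2) (Fin 2) ℤ)).det = 0) :
    (γ ^ k = 1 ∨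
      ∃ m : ℤ, m ≠ 0 ∧ (IsConj (T ^ m) γ ∨ IsConj (-(T ^ m)) γ)) ∧
    ∀ δ : Matrix.SpecialLinearGroup (Fin 2) ℤ,
      (1 - (δ : Matrix (Fin 2) (Fin 2) ℤ)).det =
          2 - Matrix.trace ((δ : Matrix (Fin 2) (Fin 2) ℤ)) ∧
        ((1 - (δ : Matrix (Fin 2) (Fin 2) ℤ)).det = 0 ↔
          Matrix.trace ((δ : Matrix (Fin 2) (Fin 2) ℤ)) = 2) := by
  have part2 : ∀ δ : Matrix.SpecialLinearGroup (Fin 2) ℤ,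
      (1 - (δ : Matrix (Fin 2) (Fin 2) ℤ)).det =
          2 - Matrix.trace ((δ : Matrix (Fin 2) (Fin 2) ℤ)) ∧
        ((1 - (δ : Matrix (Fin 2) (Fin 2) ℤ)).det = 0 ↔
          Matrix.trace ((δ : Matrix (Fin 2) (Fin 2) ℤ)) = 2) := by
    intro δ
    have hdet : (δ : Matrix (Fin 2) (Fin 2) ℤ) 0 0 * (δ : Matrix (Fin 2) (Fin 2) ℤ) 1 1
        - (δ : Matrix (Fin 2) (Fin 2) ℤ) 0 1 * (δ : Matrix (Fin 2) (Fin 2) ℤ) 1 0 = 1 := by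
      have := δ.2; rw [Matrix.det_fin_two] at this; exact this
    have heq : (1 - (δ : Matrix (Fin 2) (Fin 2) ℤ)).det =
        2 - Matrix.trace ((δ : Matrix (Fin 2) (Fin 2) ℤ)) := by
      rw [Matrix.det_fin_two, Matrix.trace_fin_two]
      simp [Matrix.sub_apply, Matrix.one_apply]
      linear_combination hdet
    refine ⟨heq, ?_⟩
    rw [heq]
    constructor <;> intro h' <;> linarith
  refine ⟨?_, part2⟩
  have htr2 : Matrix.trace ((γ ^ k : Matrix.SpecialLinearGroup (Fin 2) ℤ) :
      Matrix (Fin 2) (Fin 2) ℤ) = 2 := (part2 (γ ^ k)).2.mp h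
  by_cases h1 : γ ^ k = 1
  · exact Or.inl h1
  right
  obtain ⟨g, n, hn, hgn⟩ := key (γ ^ k) h1 htr2
  set δ : Matrix.SpecialLinearGroup (Fin 2) ℤ := g⁻¹ * γ * g with hδ
  have hδk : δ ^ k = T ^ n := by
    rw [← hgn, hδ]
    have h2 : g⁻¹ * γ * g = g⁻¹ * γ * (g⁻¹)⁻¹ := by rw [inv_inv]
    rw [h2, conj_pow, inv_inv]
  have hcomm : δ * T ^ n = T ^ n * δ := by
    rw [← hδk]
    exact ((Commute.refl δ).pow_right k).eq
  obtain ⟨m, hm⟩ := commT δ n hn hcomm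
  have hTn1 : (T : Matrix.SpecialLinearGroup (Fin 2) ℤ) ^ n ≠ 1 := by
    intro hh
    apply hn
    have := congrArg (fun X : Matrix.SpecialLinearGroup (Fin 2) ℤ =>
      (X : Matrix (Fin 2) (Fin 2) ℤ) 0 1) hh
    simpa [coe_T_zpow'] using this
  have hm0 : m ≠ 0 := by
    rintro rfl
    rcases hm with hm | hm
    · rw [zpow_zero] at hm
      rw [hm, one_pow] at hδk
      exact hTn1 hδk.symm
    · rw [zpow_zero] at hm
      apply hn
      have hmat := congrArg (fun X : Matrix.SpecialLinearGroup (Fin 2) ℤ =>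
        (X : Matrix (Fin 2) (Fin 2) ℤ) 0 1) hδk
      rw [hm] at hmat
      rcases Nat.even_or_odd k with hpar | hpar
      · rw [hpar.neg_one_pow] at hmat
        simpa [coe_T_zpow'] using hmat.symm
      · rw [hpar.neg_one_pow] at hmat
        simp only [coe_T_zpow', Matrix.SpecialLinearGroup.coe_neg] at hmat
        simpa using hmat.symm
  refine ⟨m, hm0, ?_⟩
  rcases hm with hm | hm
  · left
    rw [isConj_iff]
    refine ⟨g, ?_⟩
    rw [← hm, hδ]
    group
  · right
    rw [isConj_iff]
    refine ⟨g, ?_⟩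
    rw [← hm, hδ]
    group
end

section
/- Let γ ∈ SL(2,ℤ) and k ≥ 1. Let c ∈ Equiv.Perm (Fin k) be the k-cycle (1 2 ⋯ k), and let P be the ℤ-linear endomorphism of (Fin k → (Fin 2 → ℤ)) given by (P v) i = v i - γ ⬝ v (c⁻¹ i) (the block matrix Id_{2k} - c ⊗ γ). Then there is a ℤ-module isomorphism between the cokernel (Fin k → (Fin 2 → ℤ)) ⧸ range(P) and coker(1 - γ^k), and this isomorphism identifies the torsion submodules. -/
/-- The cokernel of a 2×2 integer matrix acting on `Fin 2 → ℤ`. -/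
abbrev cokerMat (M : Matrix (Fin 2) (Fin 2) ℤ) :=
  (Fin 2 → ℤ) ⧸ LinearMap.range (Matrix.toLin' M)

open Matrix Submodule in

theorem torsionMemMap {R M N : Type*} [CommRing R] [AddCommGroup M] [AddCommGroup N]
    [Module R M] [Module R N] (f : M ≃ₗ[R] N) (y : M) (hy : y ∈ Submodule.torsion R M) :
    f y ∈ Submodule.torsion R N := by
  rw [mem_torsion_iff] at hy ⊢
  obtain ⟨a, ha⟩ := hy
  refine ⟨a, ?_⟩
  rw [Submonoid.smul_def] at ha ⊢
  rw [← _root_.map_smul f, ha, map_zero]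

theorem torsionMapEquiv {R M N : Type*} [CommRing R] [AddCommGroup M] [AddCommGroup N]
    [Module R M] [Module R N] (e : M ≃ₗ[R] N) :
    Submodule.map e.toLinearMap (Submodule.torsion R M) = Submodule.torsion R N := by
  ext x
  simp only [Submodule.mem_map, LinearEquiv.coe_coe]
  exact ⟨fun ⟨y, hy, h⟩ => h ▸ torsionMemMap e y hy,
    fun hx => ⟨e.symm x, torsionMemMap e.symm x hx, e.apply_symm_apply x⟩⟩

open Matrix Submodule in


theorem keyEquiv (g : Matrix (Fin 2) (Fin 2) ℤ) (m : ℕ)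
    (P : (Fin (m+1) → Fin 2 → ℤ) →ₗ[ℤ] (Fin (m+1) → Fin 2 → ℤ))
    (hP : ∀ (v : Fin (m+1) → Fin 2 → ℤ) (i : Fin (m+1)),
      P v i = v i - g.mulVec (v (i - 1))) :
    Nonempty (((Fin (m+1) → Fin 2 → ℤ) ⧸ LinearMap.range P) ≃ₗ[ℤ]
      cokerMat (1 - g ^ (m+1))) := by
  set A : Matrix (Fin 2) (Fin 2) ℤ := 1 - g ^ (m+1) with hA
  set φ : (Fin (m+1) → Fin 2 → ℤ) →ₗ[ℤ] (Fin 2 → ℤ) :=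
    ∑ i : Fin (m+1), (Matrix.mulVecLin (g ^ (m - i.val))).comp (LinearMap.proj i) with hφdef
  have hφ : ∀ v, φ v = ∑ i : Fin (m+1), (g ^ (m - i.val)).mulVec (v i) := by
    intro v
    simp [hφdef, LinearMap.sum_apply]
  -- key identity: φ (P v) = A.mulVec (v (last))
  have key1 : ∀ v, φ (P v) = A.mulVec (v (Fin.last m)) := by
    intro v
    rw [hφ]
    have step : ∀ i : Fin (m+1), (g ^ (m - i.val)).mulVec (P v i)
        = (g ^ (m - i.val)).mulVec (v i) - (g ^ (m - i.val + 1)).mulVec (v (i - 1)) := by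
      intro i
      rw [hP, Matrix.mulVec_sub, Matrix.mulVec_mulVec, ← pow_succ]
    simp only [step]
    rw [Finset.sum_sub_distrib]
    have reindex : ∑ i : Fin (m+1), (g ^ (m - i.val + 1)).mulVec (v (i - 1))
        = ∑ j : Fin (m+1), (g ^ (m - ((j + 1 : Fin (m+1))).val + 1)).mulVec (v j) := by
      rw [← Equiv.sum_comp (Equiv.addRight (1 : Fin (m+1)))
        (fun i => (g ^ (m - i.val + 1)).mulVec (v (i - 1)))]
      refine Finset.sum_congr rfl fun j _ => ?_
      simp [Equiv.addRight, add_sub_cancel_right]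
    rw [reindex]
    rw [Fin.sum_univ_castSucc, Fin.sum_univ_castSucc
      (f := fun j : Fin (m+1) => (g ^ (m - ((j + 1 : Fin (m+1))).val + 1)).mulVec (v j))]
    have hcast : ∀ j : Fin m, (m - ((j.castSucc + 1 : Fin (m+1))).val + 1) = m - j.castSucc.val := by
      intro j
      rw [Fin.coeSucc_eq_succ, Fin.val_succ, Fin.coe_castSucc]
      omega
    have hlast : ((Fin.last m + 1 : Fin (m+1))).val = 0 := by
      simp [Fin.last_add_one]
    simp only [hcast, hlast]
    rw [hA, Matrix.sub_mulVec, Matrix.one_mulVec]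
    simp only [Nat.sub_self, Nat.sub_zero, pow_zero, Matrix.one_mulVec, Fin.val_last]
    abel
  -- the induced map on quotients
  set q := (LinearMap.range (Matrix.toLin' A)).mkQ with hq
  set ψ := q ∘ₗ φ with hψ
  have hle : LinearMap.range P ≤ LinearMap.ker ψ := by
    rintro x ⟨v, rfl⟩
    rw [LinearMap.mem_ker, hψ, LinearMap.comp_apply, key1, hq, Submodule.mkQ_apply,
      Submodule.Quotient.mk_eq_zero]
    exact ⟨v (Fin.last m), by rw [Matrix.toLin'_apply]⟩
  have hker : LinearMap.ker ψ ≤ LinearMap.range P := by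
    intro v hv
    rw [LinearMap.mem_ker, hψ, LinearMap.comp_apply, hq, Submodule.mkQ_apply,
      Submodule.Quotient.mk_eq_zero] at hv
    obtain ⟨w, hw⟩ := hv
    rw [Matrix.toLin'_apply] at hw
    classical
    set vv : ℕ → Fin 2 → ℤ := fun n => if h : n < m+1 then v ⟨n, h⟩ else 0 with hvv
    have hvv' : ∀ i : Fin (m+1), vv i.val = v i := fun i => by simp [hvv, i.isLt]; intro h; have := i.isLt; omega
    set u : Fin (m+1) → Fin 2 → ℤ := fun i =>
      (∑ j ∈ Finset.range (i.val+1), (g ^ (i.val - j)).mulVec (vv j))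
        + (g ^ (i.val+1)).mulVec w with hu
    have hphiv : φ v = w - (g ^ (m+1)).mulVec w := by
      rw [← hw, hA, Matrix.sub_mulVec, Matrix.one_mulVec]
    refine ⟨u, ?_⟩
    funext i
    rw [hP]
    induction i using Fin.cases with
    | zero =>
      have h0 : (0 : Fin (m+1)) - 1 = Fin.last m := by
        apply add_right_cancel (b := (1 : Fin (m+1)))
        rw [sub_add_cancel, Fin.last_add_one]
      rw [h0]
      have hu0 : u 0 = v 0 + g.mulVec w := by
        have : vv 0 = v 0 := hvv' 0
        simp [hu, Finset.sum_range_one, this]; exact ⟨rfl, rfl⟩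
      have hphi : φ v = ∑ j ∈ Finset.range (m+1), (g ^ (m - j)).mulVec (vv j) := by
        rw [hφ, ← Fin.sum_univ_eq_sum_range (fun j => (g ^ (m - j)).mulVec (vv j))]
        exact Finset.sum_congr rfl fun i _ => by rw [hvv']
      have hglast : g.mulVec (u (Fin.last m))
          = g.mulVec (φ v) + (g ^ (m+2)).mulVec w := by
        have hul : u (Fin.last m) = (∑ j ∈ Finset.range (m+1), (g ^ (m - j)).mulVec (vv j))
            + (g ^ (m+1)).mulVec w := by simp [hu]
        rw [hul, Matrix.mulVec_add, hphi, Matrix.mulVec_mulVec, ← pow_succ']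
      rw [hu0, hglast, hphiv, Matrix.mulVec_sub, Matrix.mulVec_mulVec, ← pow_succ']
      abel
    | succ j =>
      have hsub : j.succ - 1 = j.castSucc := by
        rw [← Fin.coeSucc_eq_succ, add_sub_cancel_right]
      rw [hsub]
      have hs1 : u j.succ = (∑ jj ∈ Finset.range (j.val+1),
          (g ^ (j.val+1 - jj)).mulVec (vv jj)) + v j.succ + (g ^ (j.val+1+1)).mulVec w := by
        rw [hu]
        simp only [Fin.val_succ]
        rw [Finset.sum_range_succ, Nat.sub_self, pow_zero, Matrix.one_mulVec]
        have hvs := hvv' j.succ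
        rw [Fin.val_succ] at hvs
        rw [hvs]
      have h2 : g.mulVec (u j.castSucc) = (∑ jj ∈ Finset.range (j.val+1),
          (g ^ (j.val+1 - jj)).mulVec (vv jj)) + (g ^ (j.val+1+1)).mulVec w := by
        rw [hu]
        simp only [Fin.coe_castSucc]
        rw [Matrix.mulVec_add, Matrix.mulVec_mulVec, ← pow_succ']
        congr 1
        rw [← Matrix.mulVecLin_apply, map_sum]
        refine Finset.sum_congr rfl fun jj hjj => ?_
        rw [Finset.mem_range] at hjj
        rw [Matrix.mulVecLin_apply, Matrix.mulVec_mulVec, ← pow_succ']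
        have hexp : (↑j : ℕ) - jj + 1 = ↑j + 1 - jj := by omega
        rw [hexp]
      rw [hs1, h2]
      abel
  set φbar := (LinearMap.range P).liftQ ψ hle with hφbar
  have hinj : LinearMap.ker φbar = ⊥ := Submodule.ker_liftQ_eq_bot _ _ hle hker
  have hsurj : LinearMap.range φbar = ⊤ := by
    rw [hφbar, Submodule.range_liftQ, LinearMap.range_eq_top]
    intro x
    obtain ⟨y, rfl⟩ := Submodule.mkQ_surjective _ x
    refine ⟨Pi.single (Fin.last m) y, ?_⟩
    rw [hψ, LinearMap.comp_apply, hq]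
    congr 1
    rw [hφ, Finset.sum_eq_single (Fin.last m)]
    · simp
    · intro i _ hi
      rw [Pi.single_eq_of_ne hi, Matrix.mulVec_zero]
    · simp
  exact ⟨LinearEquiv.ofBijective φbar
    ⟨LinearMap.ker_eq_bot.mp hinj, LinearMap.range_eq_top.mp hsurj⟩⟩


/-- for the `k`-cycle `c = (1 2 ⋯ k)` and the endomorphism `P` of
`Fin k → (Fin 2 → ℤ)` given by `(P v) i = v i - γ ⬝ v (c⁻¹ i)` (the block matrix
`Id_{2k} - c ⊗ γ`), the cokernel of `P` is isomorphic as a `ℤ`-module to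
`coker(1 - γ^k)`, via an isomorphism identifying the torsion submodules. -/
theorem stmt2 (γ : Matrix.SpecialLinearGroup (Fin 2) ℤ) (k : ℕ) (hk : 1 ≤ k)
    (P : (Fin k → Fin 2 → ℤ) →ₗ[ℤ] (Fin k → Fin 2 → ℤ))
    (hP : ∀ (v : Fin k → Fin 2 → ℤ) (i : Fin k),
      P v i = v i - Matrix.mulVec (γ : Matrix (Fin 2) (Fin 2) ℤ) (v ((finRotate k)⁻¹ i))) :
    ∃ e : ((Fin k → Fin 2 → ℤ) ⧸ LinearMap.range P) ≃ₗ[ℤ]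
        cokerMat (1 - ((γ ^ k : Matrix.SpecialLinearGroup (Fin 2) ℤ) :
          Matrix (Fin 2) (Fin 2) ℤ)),
      Submodule.map e.toLinearMap
          (Submodule.torsion ℤ ((Fin k → Fin 2 → ℤ) ⧸ LinearMap.range P)) =
        Submodule.torsion ℤ (cokerMat (1 - ((γ ^ k : Matrix.SpecialLinearGroup (Fin 2) ℤ) :
          Matrix (Fin 2) (Fin 2) ℤ))) := by
  obtain ⟨m, rfl⟩ : ∃ m, k = m + 1 := ⟨k - 1, (Nat.succ_pred_eq_of_pos hk).symm⟩
  have hrot : ∀ i : Fin (m+1), (finRotate (m+1))⁻¹ i = i - 1 := by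
    intro i
    rw [Equiv.Perm.inv_def, Equiv.symm_apply_eq, finRotate_succ_apply, sub_add_cancel]
  have hP' : ∀ (v : Fin (m+1) → Fin 2 → ℤ) (i : Fin (m+1)),
      P v i = v i - Matrix.mulVec (γ : Matrix (Fin 2) (Fin 2) ℤ) (v (i - 1)) := by
    intro v i
    rw [hP, hrot]
  simp only [Matrix.SpecialLinearGroup.coe_pow]
  obtain ⟨e⟩ := keyEquiv (γ : Matrix (Fin 2) (Fin 2) ℤ) m P hP'
  exact ⟨e, torsionMapEquiv e⟩
end

section
/- Let γ ∈ SL(2,ℤ), N ≥ 1, and w ∈ Equiv.Perm (Fin N). Let L be the ℤ-linear endomorphism of (Fin N → (Fin 2 → ℤ)) given by (L v) i = v i - γ ⬝ v (w⁻¹ i) (the matrix Id_{2N} - w ⊗ γ). Then there is a ℤ-module isomorphism between the cokernel (Fin N → (Fin 2 → ℤ)) ⧸ range(L) and the direct sum, over the orbits o of the cyclic group ⟨w⟩ acting on Fin N, of coker(1 - γ^{|o|}), where |o| denotes the cardinality of the orbit o; consequently the torsion submodules of the two sides are also isomorphic. -/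
open DirectSum

namespace Stmt3Aux

open MulAction Subgroup Function Matrix

/-- Torsion submodules of isomorphic modules are isomorphic. -/
noncomputable def torsionCongr {R A B : Type*} [CommRing R] [AddCommMonoid A] [AddCommMonoid B]
    [Module R A] [Module R B] (e : A ≃ₗ[R] B) :
    (Submodule.torsion R A) ≃ₗ[R] (Submodule.torsion R B) :=
  LinearEquiv.ofSubmodules e _ _ (by
    ext y
    simp only [Submodule.mem_map, Submodule.mem_torsion_iff]
    constructor
    · rintro ⟨x, ⟨a, ha⟩, rfl⟩
      refine ⟨a, ?_⟩
      have h2 := congrArg e ha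
      simpa [Submonoid.smul_def] using h2
    · rintro ⟨a, ha⟩
      refine ⟨e.symm y, ⟨a, ?_⟩, e.apply_symm_apply y⟩
      have h2 := congrArg e.symm ha
      simpa [Submonoid.smul_def] using h2)

variable {N : ℕ} (γ : Matrix.SpecialLinearGroup (Fin 2) ℤ) (w : Equiv.Perm (Fin N))

local notation "Q" => MulAction.orbitRel.Quotient (Subgroup.zpowers w) (Fin N)

/-- The cardinality of an orbit. -/
noncomputable def kk (o : Q) : ℕ := Nat.card o.orbit

/-- A representative of an orbit. -/
noncomputable def rep (o : Q) : Fin N := o.out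

/-- The matrix `1 - γ^|o|`. -/
noncomputable def Mo (o : Q) : Matrix (Fin 2) (Fin 2) ℤ :=
  1 - ((γ ^ (Nat.card o.orbit) : Matrix.SpecialLinearGroup (Fin 2) ℤ) :
    Matrix (Fin 2) (Fin 2) ℤ)

lemma Mo_eq (o : Q) : Mo γ w o = 1 - (γ : Matrix (Fin 2) (Fin 2) ℤ) ^ (kk w o) := by
  rw [Mo, Matrix.SpecialLinearGroup.coe_pow]; rfl

lemma kk_eq (o : Q) : kk w o = Function.minimalPeriod (w • ·) (rep w o) := by
  have h : o.orbit = MulAction.orbit (Subgroup.zpowers w) (rep w o) :=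
    MulAction.orbitRel.Quotient.orbit_eq_orbit_out o Quotient.out_eq'
  rw [kk, h, Nat.card_congr (MulAction.orbitZPowersEquiv w (rep w o)), Nat.card_zmod]

lemma kk_pos (o : Q) : 0 < kk w o := by
  rw [kk_eq]
  haveI := MulAction.minimalPeriod_pos w (rep w o)
  exact Nat.pos_of_ne_zero (NeZero.ne _)

lemma pow_rep (o : Q) : (w ^ (kk w o)) (rep w o) = rep w o := by
  have := (MulAction.pow_smul_eq_iff_minimalPeriod_dvd
    (a := w) (b := rep w o) (n := kk w o)).2 (by rw [kk_eq])
  simpa [Equiv.Perm.smul_def] using this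

lemma pow_rep_eq_zero (o : Q) {j : ℕ} (hj : j < kk w o) (h : (w ^ j) (rep w o) = rep w o) :
    j = 0 := by
  have hd := (MulAction.pow_smul_eq_iff_minimalPeriod_dvd
    (a := w) (b := rep w o) (n := j)).1 (by simpa [Equiv.Perm.smul_def] using h)
  rw [← kk_eq] at hd
  by_contra h0
  exact absurd (Nat.le_of_dvd (Nat.pos_of_ne_zero h0) hd) (not_le.2 hj)

lemma rep_eq {o o' : Q} {j : ℕ} (h : ((w⁻¹) ^ j) (rep w o') = rep w o) : o' = o := by
  have hmem : rep w o ∈ MulAction.orbit (Subgroup.zpowers w) (rep w o') := by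
    refine ⟨⟨(w⁻¹) ^ j, ?_⟩, ?_⟩
    · rw [inv_pow]
      exact inv_mem (Subgroup.npow_mem_zpowers w j)
    · simpa [Submonoid.smul_def, Equiv.Perm.smul_def] using h
  have : (Quotient.mk'' (rep w o) : Q) = Quotient.mk'' (rep w o') :=
    Quotient.sound'  ((MulAction.orbitRel_apply).2 hmem)
  have ho : (Quotient.mk'' (rep w o) : Q) = o := Quotient.out_eq' o
  have ho' : (Quotient.mk'' (rep w o') : Q) = o' := Quotient.out_eq' o'
  rw [ho, ho'] at this
  exact this.symm

/-- The map `v ↦ ∑_{j<k} γ^j ⬝ v ((w⁻¹)^j r)`. -/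
noncomputable def sMap (o : Q) : (Fin N → Fin 2 → ℤ) →ₗ[ℤ] (Fin 2 → ℤ) :=
  ∑ j ∈ Finset.range (kk w o),
    (Matrix.toLin' ((γ : Matrix (Fin 2) (Fin 2) ℤ) ^ j)).comp
      (LinearMap.proj (((w⁻¹) ^ j) (rep w o)))

lemma sMap_apply (o : Q) (v : Fin N → Fin 2 → ℤ) :
    sMap γ w o v = ∑ j ∈ Finset.range (kk w o),
      ((γ : Matrix (Fin 2) (Fin 2) ℤ) ^ j).mulVec (v (((w⁻¹) ^ j) (rep w o))) := by
  simp only [sMap, LinearMap.sum_apply, LinearMap.comp_apply,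
    LinearMap.proj_apply, Matrix.toLin'_apply]


/-- The `j`-th point of the orbit of `rep o`, going backwards. -/
noncomputable def aa (o : Q) (j : ℕ) : Fin N := ((w⁻¹) ^ j) (rep w o)

lemma aa_zero (o : Q) : aa w o 0 = rep w o := by simp [aa]

lemma aa_succ (o : Q) (j : ℕ) : aa w o (j + 1) = w⁻¹ (aa w o j) := by
  rw [aa, aa, pow_succ', Equiv.Perm.mul_apply]

lemma w_aa_succ (o : Q) (j : ℕ) : w (aa w o (j + 1)) = aa w o j := by
  rw [aa_succ, ← Equiv.Perm.mul_apply, mul_inv_cancel, Equiv.Perm.one_apply]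

lemma aa_kk (o : Q) : aa w o (kk w o) = rep w o := by
  rw [aa, inv_pow, Equiv.Perm.inv_eq_iff_eq]
  exact (pow_rep w o).symm

lemma shift (A : Matrix (Fin 2) (Fin 2) ℤ) (b : Fin N) (m : Fin 2 → ℤ) :
    (fun i => A.mulVec ((Pi.single b m : Fin N → Fin 2 → ℤ) (w⁻¹ i)))
      = Pi.single (w b) (A.mulVec m) := by
  funext i
  rcases eq_or_ne i (w b) with rfl | h
  · simp [Pi.single_apply]
  · have h1 : w⁻¹ i ≠ b := fun hc => h (by rw [← hc, ← Equiv.Perm.mul_apply, mul_inv_cancel, Equiv.Perm.one_apply])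
    simp [Pi.single_apply, show (Equiv.symm w) i ≠ b from h1, h, Matrix.mulVec_zero]

variable (L : (Fin N → Fin 2 → ℤ) →ₗ[ℤ] (Fin N → Fin 2 → ℤ))

lemma single_L (hL : ∀ (v : Fin N → Fin 2 → ℤ) (i : Fin N),
      L v i = v i - Matrix.mulVec (γ : Matrix (Fin 2) (Fin 2) ℤ) (v (w⁻¹ i)))
    (i : Fin N) (u : Fin 2 → ℤ) :
    L (Pi.single i u)
      = Pi.single i u - Pi.single (w i) ((γ : Matrix (Fin 2) (Fin 2) ℤ).mulVec u) := by
  funext j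
  rw [← shift w (γ : Matrix (Fin 2) (Fin 2) ℤ) i u]
  simp only [Pi.sub_apply]
  rw [hL]

lemma sMap_L (hL : ∀ (v : Fin N → Fin 2 → ℤ) (i : Fin N),
      L v i = v i - Matrix.mulVec (γ : Matrix (Fin 2) (Fin 2) ℤ) (v (w⁻¹ i)))
    (o : Q) (v : Fin N → Fin 2 → ℤ) :
    sMap γ w o (L v) = (Mo γ w o).mulVec (v (rep w o)) := by
  rw [sMap_apply]
  have hterm : ∀ j ∈ Finset.range (kk w o),
      ((γ : Matrix (Fin 2) (Fin 2) ℤ) ^ j).mulVec ((L v) (((w⁻¹) ^ j) (rep w o)))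
      = (fun j => ((γ : Matrix (Fin 2) (Fin 2) ℤ) ^ j).mulVec (v (aa w o j))) j
        - (fun j => ((γ : Matrix (Fin 2) (Fin 2) ℤ) ^ j).mulVec (v (aa w o j))) (j + 1) := by
    intro j _
    simp only []
    have h1 : (L v) (aa w o j) = v (aa w o j)
        - (γ : Matrix (Fin 2) (Fin 2) ℤ).mulVec (v (aa w o (j + 1))) := by
      rw [hL, aa_succ]
    show ((γ : Matrix (Fin 2) (Fin 2) ℤ) ^ j).mulVec ((L v) (aa w o j)) = _
    rw [h1, Matrix.mulVec_sub, Matrix.mulVec_mulVec, ← pow_succ]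
  rw [Finset.sum_congr rfl hterm, Finset.sum_range_sub']
  rw [pow_zero, Matrix.one_mulVec, aa_zero, aa_kk, Mo_eq, Matrix.sub_mulVec,
    Matrix.one_mulVec]

lemma single_rep_mem (hL : ∀ (v : Fin N → Fin 2 → ℤ) (i : Fin N),
      L v i = v i - Matrix.mulVec (γ : Matrix (Fin 2) (Fin 2) ℤ) (v (w⁻¹ i)))
    (o : Q) (u : Fin 2 → ℤ) :
    Pi.single (rep w o) ((Mo γ w o).mulVec u) ∈ LinearMap.range L := by
  classical
  set g : ℕ → (Fin N → Fin 2 → ℤ) :=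
    fun j => Pi.single (aa w o j) (((γ : Matrix (Fin 2) (Fin 2) ℤ) ^ (kk w o - j)).mulVec u)
    with hg
  refine ⟨∑ j ∈ Finset.range (kk w o), g (j + 1), ?_⟩
  rw [map_sum]
  have hterm : ∀ j ∈ Finset.range (kk w o), L (g (j + 1)) = g (j + 1) - g j := by
    intro j hj
    have hjk : j < kk w o := Finset.mem_range.1 hj
    have h1 : (γ : Matrix (Fin 2) (Fin 2) ℤ).mulVec
        (((γ : Matrix (Fin 2) (Fin 2) ℤ) ^ (kk w o - (j + 1))).mulVec u)
        = ((γ : Matrix (Fin 2) (Fin 2) ℤ) ^ (kk w o - j)).mulVec u := by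
      have hs : kk w o - j = (kk w o - (j + 1)) + 1 := by omega
      rw [Matrix.mulVec_mulVec, ← pow_succ', hs]
    simp only [hg]
    rw [single_L γ w L hL, w_aa_succ, h1]
  rw [Finset.sum_congr rfl hterm, Finset.sum_range_sub g]
  simp only [hg]
  rw [aa_zero, aa_kk, Nat.sub_self, Nat.sub_zero, pow_zero, Matrix.one_mulVec,
    ← Pi.single_sub, Mo_eq, Matrix.sub_mulVec, Matrix.one_mulVec]


lemma sMap_single_self (o : Q) (u : Fin 2 → ℤ) :
    sMap γ w o (Pi.single (rep w o) u) = u := by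
  classical
  rw [sMap_apply, Finset.sum_eq_single 0]
  · have h0 : ((w⁻¹ : Equiv.Perm (Fin N)) ^ 0) (rep w o) = rep w o := by
      rw [pow_zero]; rfl
    rw [pow_zero, h0, Pi.single_eq_same, Matrix.one_mulVec]
  · intro j hj hj0
    have hjk : j < kk w o := Finset.mem_range.1 hj
    have hne : ((w⁻¹) ^ j) (rep w o) ≠ rep w o := by
      intro hc
      apply hj0
      apply pow_rep_eq_zero w o hjk
      rw [inv_pow, Equiv.Perm.inv_eq_iff_eq] at hc
      exact hc.symm
    rw [Pi.single_eq_of_ne hne, Matrix.mulVec_zero]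
  · intro h
    exact absurd (Finset.mem_range.2 (kk_pos w o)) h

lemma sMap_single_ne (o o' : Q) (h : o' ≠ o) (u : Fin 2 → ℤ) :
    sMap γ w o (Pi.single (rep w o') u) = 0 := by
  classical
  rw [sMap_apply]
  refine Finset.sum_eq_zero fun j _ => ?_
  have hne : ((w⁻¹) ^ j) (rep w o) ≠ rep w o' := fun hc => h ((rep_eq w hc).symm)
  rw [Pi.single_eq_of_ne hne, Matrix.mulVec_zero]

/-- The comparison map into the product of the small cokernels. -/
noncomputable def φ0 : (Fin N → Fin 2 → ℤ) →ₗ[ℤ] ∀ o : Q, cokerMat (Mo γ w o) :=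
  LinearMap.pi fun o => (LinearMap.range (Matrix.toLin' (Mo γ w o))).mkQ.comp (sMap γ w o)

lemma range_le_ker (hL : ∀ (v : Fin N → Fin 2 → ℤ) (i : Fin N),
      L v i = v i - Matrix.mulVec (γ : Matrix (Fin 2) (Fin 2) ℤ) (v (w⁻¹ i))) :
    LinearMap.range L ≤ LinearMap.ker (φ0 γ w) := by
  rintro x ⟨v, rfl⟩
  rw [LinearMap.mem_ker]
  funext o
  show Submodule.Quotient.mk (sMap γ w o (L v)) = (0 : cokerMat (Mo γ w o))
  rw [sMap_L γ w L hL, Submodule.Quotient.mk_eq_zero]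
  exact ⟨v (rep w o), by rw [Matrix.toLin'_apply]⟩

/-- The induced map on the cokernel of `L`. -/
noncomputable def φbar (hL : ∀ (v : Fin N → Fin 2 → ℤ) (i : Fin N),
      L v i = v i - Matrix.mulVec (γ : Matrix (Fin 2) (Fin 2) ℤ) (v (w⁻¹ i))) :
    ((Fin N → Fin 2 → ℤ) ⧸ LinearMap.range L) →ₗ[ℤ] ∀ o : Q, cokerMat (Mo γ w o) :=
  Submodule.liftQ _ (φ0 γ w) (range_le_ker γ w L hL)

/-- The map back, on one factor. -/
noncomputable def ψcomp (hL : ∀ (v : Fin N → Fin 2 → ℤ) (i : Fin N),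
      L v i = v i - Matrix.mulVec (γ : Matrix (Fin 2) (Fin 2) ℤ) (v (w⁻¹ i))) (o : Q) :
    cokerMat (Mo γ w o) →ₗ[ℤ] ((Fin N → Fin 2 → ℤ) ⧸ LinearMap.range L) :=
  Submodule.liftQ _ ((LinearMap.range L).mkQ.comp
      (LinearMap.single ℤ (fun _ : Fin N => (Fin 2 → ℤ)) (rep w o)))
    (by
      rintro x ⟨u, rfl⟩
      rw [LinearMap.mem_ker, LinearMap.comp_apply]
      show (LinearMap.range L).mkQ (Pi.single (rep w o) (Matrix.toLin' (Mo γ w o) u)) = 0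
      rw [Matrix.toLin'_apply, Submodule.mkQ_apply, Submodule.Quotient.mk_eq_zero]
      exact single_rep_mem γ w L hL o u)

/-- The map back. -/
noncomputable def ψ0 [Fintype Q] (hL : ∀ (v : Fin N → Fin 2 → ℤ) (i : Fin N),
      L v i = v i - Matrix.mulVec (γ : Matrix (Fin 2) (Fin 2) ℤ) (v (w⁻¹ i))) :
    (∀ o : Q, cokerMat (Mo γ w o)) →ₗ[ℤ] ((Fin N → Fin 2 → ℤ) ⧸ LinearMap.range L) :=
  ∑ o : Q, (ψcomp γ w L hL o).comp (LinearMap.proj o)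

lemma ψ0_single [Fintype Q] [DecidableEq Q] (hL : ∀ (v : Fin N → Fin 2 → ℤ) (i : Fin N),
      L v i = v i - Matrix.mulVec (γ : Matrix (Fin 2) (Fin 2) ℤ) (v (w⁻¹ i)))
    (o : Q) (u : Fin 2 → ℤ) :
    ψ0 γ w L hL (Pi.single o (Submodule.Quotient.mk u))
      = Submodule.Quotient.mk (Pi.single (rep w o) u) := by
  rw [ψ0, LinearMap.sum_apply, Finset.sum_eq_single o]
  · show ψcomp γ w L hL o ((Pi.single o (Submodule.Quotient.mk u) :
      ∀ o' : Q, cokerMat (Mo γ w o')) o) = _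
    rw [Pi.single_eq_same]
    rfl
  · intro o' _ hne
    show ψcomp γ w L hL o' ((Pi.single o (Submodule.Quotient.mk u) :
      ∀ o' : Q, cokerMat (Mo γ w o')) o') = 0
    rw [Pi.single_eq_of_ne hne, map_zero]
  · intro h
    exact absurd (Finset.mem_univ o) h

lemma φ0_single [DecidableEq Q] (o : Q) (u : Fin 2 → ℤ) :
    φ0 γ w (Pi.single (rep w o) u) = Pi.single o (Submodule.Quotient.mk u) := by
  funext o'
  show Submodule.Quotient.mk (sMap γ w o' (Pi.single (rep w o) u)) = _
  rcases eq_or_ne o o' with rfl | h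
  · rw [sMap_single_self, Pi.single_eq_same]
  · rw [sMap_single_ne γ w o' o h, Pi.single_eq_of_ne (Ne.symm h)]
    exact Submodule.Quotient.mk_zero _

lemma φ0_surj [Fintype Q] [DecidableEq Q] : Function.Surjective (φ0 γ w) := by
  intro x
  have hx : x = ∑ o : Q, Pi.single o (x o) := (Finset.univ_sum_single x).symm
  choose u hu using fun o : Q => Submodule.Quotient.mk_surjective _ (x o)
  refine ⟨∑ o : Q, Pi.single (rep w o) (u o), ?_⟩
  rw [map_sum]
  conv_rhs => rw [hx]
  refine Finset.sum_congr rfl fun o _ => ?_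
  rw [φ0_single, hu]

lemma ψ0_surj [Fintype Q] [DecidableEq Q] (hL : ∀ (v : Fin N → Fin 2 → ℤ) (i : Fin N),
      L v i = v i - Matrix.mulVec (γ : Matrix (Fin 2) (Fin 2) ℤ) (v (w⁻¹ i))) :
    Function.Surjective (ψ0 γ w L hL) := by
  have step : ∀ (i : Fin N) (u : Fin 2 → ℤ),
      ((LinearMap.range L).mkQ (Pi.single i u))
        = (LinearMap.range L).mkQ
            (Pi.single (w i) ((γ : Matrix (Fin 2) (Fin 2) ℤ).mulVec u)) := by
    intro i u
    rw [Submodule.mkQ_apply, Submodule.mkQ_apply, Submodule.Quotient.eq]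
    exact ⟨Pi.single i u, single_L γ w L hL i u⟩
  have iter : ∀ (m : ℕ) (i : Fin N) (u : Fin 2 → ℤ),
      ((LinearMap.range L).mkQ (Pi.single i u))
        = (LinearMap.range L).mkQ
            (Pi.single ((w ^ m) i) (((γ : Matrix (Fin 2) (Fin 2) ℤ) ^ m).mulVec u)) := by
    intro m
    induction m with
    | zero => intro i u; simp
    | succ m ih =>
      intro i u
      rw [ih, step]
      have h1 : (w ^ (m + 1)) i = w ((w ^ m) i) := by
        rw [pow_succ', Equiv.Perm.mul_apply]
      rw [h1, Matrix.mulVec_mulVec, ← pow_succ']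
  have mem_single : ∀ (i : Fin N) (u : Fin 2 → ℤ),
      ((LinearMap.range L).mkQ (Pi.single i u)) ∈ LinearMap.range (ψ0 γ w L hL) := by
    intro i u
    set o : Q := Quotient.mk'' i with ho
    have h1 : (Quotient.mk'' (rep w o) : Q) = Quotient.mk'' i :=
      (Quotient.out_eq' o).trans ho
    obtain ⟨g, hg⟩ : rep w o ∈ MulAction.orbit (Subgroup.zpowers w) i :=
      (MulAction.orbitRel_apply).1 (Quotient.exact' h1)
    obtain ⟨z, hz⟩ := Subgroup.mem_zpowers_iff.1 g.2
    have hord : 0 < orderOf w := orderOf_pos w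
    have hmod : (0 : ℤ) ≤ z % (orderOf w : ℤ) :=
      Int.emod_nonneg z (by exact_mod_cast hord.ne')
    set n : ℕ := (z % (orderOf w : ℤ)).toNat with hn
    have hpow : w ^ n = w ^ z := by
      rw [hn, ← zpow_natCast, Int.toNat_of_nonneg hmod, zpow_mod_orderOf]
    have happ : (w ^ n) i = rep w o := by
      have h2 : (↑g : Equiv.Perm (Fin N)) i = rep w o := by
        simpa [Subgroup.smul_def, Equiv.Perm.smul_def] using hg
      rw [hpow, hz]
      exact h2
    refine ⟨Pi.single o (Submodule.Quotient.mk
      (((γ : Matrix (Fin 2) (Fin 2) ℤ) ^ n).mulVec u)), ?_⟩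
    rw [ψ0_single, ← Submodule.mkQ_apply, ← happ, ← iter]
  rw [← LinearMap.range_eq_top, eq_top_iff]
  rintro x -
  obtain ⟨v, rfl⟩ := Submodule.mkQ_surjective _ x
  have hv : (LinearMap.range L).mkQ v
      = ∑ i : Fin N, (LinearMap.range L).mkQ (Pi.single i (v i)) := by
    rw [← map_sum, Finset.univ_sum_single]
  rw [hv]
  exact Submodule.sum_mem _ fun i _ => mem_single i (v i)

end Stmt3Aux

/-- for `w ∈ S_N` and the endomorphism `L` of `Fin N → (Fin 2 → ℤ)` given by
`(L v) i = v i - γ ⬝ v (w⁻¹ i)` (the matrix `Id_{2N} - w ⊗ γ`), the cokernel of `L` is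
isomorphic as a `ℤ`-module to the direct sum over the orbits `o` of `⟨w⟩` on `Fin N`
of `coker(1 - γ^{|o|})`; consequently the torsion submodules are isomorphic. -/
theorem stmt3 (γ : Matrix.SpecialLinearGroup (Fin 2) ℤ) (N : ℕ) (hN : 1 ≤ N)
    (w : Equiv.Perm (Fin N))
    (L : (Fin N → Fin 2 → ℤ) →ₗ[ℤ] (Fin N → Fin 2 → ℤ))
    (hL : ∀ (v : Fin N → Fin 2 → ℤ) (i : Fin N),
      L v i = v i - Matrix.mulVec (γ : Matrix (Fin 2) (Fin 2) ℤ) (v (w⁻¹ i))) :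
    Nonempty (((Fin N → Fin 2 → ℤ) ⧸ LinearMap.range L) ≃ₗ[ℤ]
        (⨁ o : MulAction.orbitRel.Quotient (Subgroup.zpowers w) (Fin N),
          cokerMat (1 - ((γ ^ (Nat.card o.orbit) : Matrix.SpecialLinearGroup (Fin 2) ℤ) :
            Matrix (Fin 2) (Fin 2) ℤ)))) ∧
    Nonempty ((Submodule.torsion ℤ ((Fin N → Fin 2 → ℤ) ⧸ LinearMap.range L)) ≃ₗ[ℤ]
        (Submodule.torsion ℤ
          (⨁ o : MulAction.orbitRel.Quotient (Subgroup.zpowers w) (Fin N),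
            cokerMat (1 - ((γ ^ (Nat.card o.orbit) : Matrix.SpecialLinearGroup (Fin 2) ℤ) :
              Matrix (Fin 2) (Fin 2) ℤ))))) := by
  classical
  letI : Fintype (MulAction.orbitRel.Quotient (Subgroup.zpowers w) (Fin N)) :=
    Fintype.ofFinite _
  letI : DecidableEq (MulAction.orbitRel.Quotient (Subgroup.zpowers w) (Fin N)) :=
    Classical.decEq _
  have hφs : Function.Surjective (Stmt3Aux.φbar γ w L hL) := by
    intro x
    obtain ⟨v, hv⟩ := Stmt3Aux.φ0_surj γ w x
    exact ⟨Submodule.Quotient.mk v, hv⟩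
  have hψs := Stmt3Aux.ψ0_surj γ w L hL
  have hcomp : Function.Surjective
      ((Stmt3Aux.φbar γ w L hL).comp (Stmt3Aux.ψ0 γ w L hL)) := hφs.comp hψs
  have hinj : Function.Injective
      ((Stmt3Aux.φbar γ w L hL).comp (Stmt3Aux.ψ0 γ w L hL)) :=
    OrzechProperty.injective_of_surjective_endomorphism _ hcomp
  have hψinj : Function.Injective (Stmt3Aux.ψ0 γ w L hL) := fun a b hab => by
    apply hinj
    simp only [LinearMap.comp_apply, hab]
  have e : ((Fin N → Fin 2 → ℤ) ⧸ LinearMap.range L) ≃ₗ[ℤ]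
      (⨁ o : MulAction.orbitRel.Quotient (Subgroup.zpowers w) (Fin N),
        cokerMat (Stmt3Aux.Mo γ w o)) :=
    (LinearEquiv.ofBijective (Stmt3Aux.ψ0 γ w L hL) ⟨hψinj, hψs⟩).symm.trans
      (DirectSum.linearEquivFunOnFintype ℤ _ (fun o => cokerMat (Stmt3Aux.Mo γ w o))).symm
  exact ⟨⟨e⟩, ⟨Stmt3Aux.torsionCongr e⟩⟩
end

section
/- Let c : ℕ → ℕ and let N ≥ 1. In the ring of formal power series PowerSeries ℚ, the coefficient of t^N in the finite product ∏_{k=1}^{N} ((1 - t^k)⁻¹)^{c k} equals ∑_{λ} ∏_{k=1}^{N} C(c k + r_k(λ) - 1, r_k(λ)), where the sum is over all partitions λ of N, r_k(λ) denotes the multiplicity of the part k in λ, and C(a,b) denotes the binomial coefficient. -/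
open PowerSeries Finset

/-- coefficient function of `((1 - X^k)⁻¹)^c`. -/
def pg (k c n : ℕ) : ℚ := if k ∣ n then (Nat.choose (c + n / k - 1) (n / k) : ℚ) else 0

lemma pg_mul (k c : ℕ) (hk : 1 ≤ k) :
    PowerSeries.mk (pg k (c+1)) * (1 - (X : ℚ⟦X⟧)^k) = PowerSeries.mk (pg k c) := by
  ext n
  rw [mul_sub, mul_one, map_sub, PowerSeries.coeff_mul_X_pow']
  simp only [coeff_mk]
  by_cases hd : k ∣ n
  · obtain ⟨r, rfl⟩ := hd
    cases r with
    | zero =>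
      simp only [Nat.mul_zero]
      rw [if_neg (by omega)]
      simp [pg, Nat.choose]
    | succ r =>
      rw [if_pos (by nlinarith)]
      have h1 : k * (r+1) - k = k * r := by ring_nf; omega
      rw [h1]
      simp only [pg, if_pos (dvd_mul_right k (r+1)), if_pos (dvd_mul_right k r),
        Nat.mul_div_cancel_left _ (by omega : 0 < k)]
      have e1 : c + 1 + (r + 1) - 1 = (c + r) + 1 := by omega
      have e2 : c + 1 + r - 1 = c + r := by omega
      have e3 : c + (r + 1) - 1 = c + r := by omega
      rw [e1, e2, e3, Nat.choose_succ_succ]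
      push_cast
      ring
  · have h2 : pg k c n = 0 := if_neg hd
    have h3 : pg k (c+1) n = 0 := if_neg hd
    rw [h2, h3]
    by_cases hle : k ≤ n
    · rw [if_pos hle]
      have hnd : ¬ k ∣ (n - k) := fun h => hd (by
        have h5 := dvd_add h (dvd_refl k)
        rwa [Nat.sub_add_cancel hle] at h5)
      simp [pg, hnd]
    · rw [if_neg hle]; ring

lemma pg_zero (k : ℕ) (hk : 1 ≤ k) : PowerSeries.mk (pg k 0) = 1 := by
  ext n
  rw [coeff_mk, PowerSeries.coeff_one]
  rcases Nat.eq_zero_or_pos n with rfl | hn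
  · simp [pg]
  · rw [if_neg (by omega)]
    by_cases hd : k ∣ n
    · have hr : 1 ≤ n / k := Nat.one_le_div_iff (by omega) |>.2 (Nat.le_of_dvd hn hd)
      simp only [pg, if_pos hd, Nat.zero_add]
      rw [Nat.choose_eq_zero_of_lt (by omega)]
      norm_num
    · simp [pg, hd]

lemma pg_spec (k c : ℕ) (hk : 1 ≤ k) :
    PowerSeries.mk (pg k c) * (1 - (X : ℚ⟦X⟧)^k)^c = 1 := by
  induction c with
  | zero => simp [pg_zero k hk]
  | succ c ih =>
    rw [pow_succ, show PowerSeries.mk (pg k (c+1)) * ((1 - (X : ℚ⟦X⟧)^k)^c * (1 - X^k)) =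
      (PowerSeries.mk (pg k (c+1)) * (1 - X^k)) * (1 - X^k)^c by ring, pg_mul k c hk, ih]

lemma hconst (k : ℕ) (hk : 1 ≤ k) : constantCoeff (1 - (X : ℚ⟦X⟧)^k) = 1 := by
  rw [map_sub, map_one, map_pow, constantCoeff_X, zero_pow (by omega), sub_zero]

lemma inv_pow_eq (k c : ℕ) (hk : 1 ≤ k) :
    ((1 - (X : ℚ⟦X⟧)^k)⁻¹)^c = PowerSeries.mk (pg k c) := by
  have hc : constantCoeff ((1 - (X : ℚ⟦X⟧)^k)^c) ≠ 0 := by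
    rw [map_pow, hconst k hk, one_pow]; norm_num
  have h1 : ((1 - (X : ℚ⟦X⟧)^k)⁻¹)^c * (1 - X^k)^c = 1 := by
    rw [← mul_pow, PowerSeries.inv_mul_cancel _ (by rw [hconst k hk]; norm_num), one_pow]
  rw [(PowerSeries.eq_inv_iff_mul_eq_one hc).2 h1,
    ← (PowerSeries.eq_inv_iff_mul_eq_one hc).2 (pg_spec k c hk)]

section Aux
variable (N : ℕ)

lemma part_mem_Icc (p : Nat.Partition N) {j : ℕ} (hj : j ∈ p.parts) : j ∈ Finset.Icc 1 N := by
  have h1 := p.parts_pos hj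
  have h2 : j ≤ N := by
    have := Multiset.single_le_sum (fun x _ => Nat.zero_le x) j hj
    rwa [p.parts_sum] at this
  exact Finset.mem_Icc.mpr ⟨h1, h2⟩

lemma count_out (p : Nat.Partition N) {j : ℕ} (hj : j ∉ Finset.Icc 1 N) :
    p.parts.count j = 0 := by
  rw [Multiset.count_eq_zero]
  exact fun hmem => hj (part_mem_Icc N p hmem)

/-- The finsupp `k ↦ k * (count of k in p)` associated to a partition. -/
noncomputable def toF (p : Nat.Partition N) : ℕ →₀ ℕ :=
  Finsupp.onFinset (Finset.Icc 1 N) (fun k => k * p.parts.count k) (by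
    intro k hk
    simp only [ne_eq, Nat.mul_eq_zero, not_or] at hk
    exact part_mem_Icc N p (Multiset.count_pos.mp (Nat.pos_of_ne_zero hk.2)))

lemma toF_apply (p : Nat.Partition N) (k : ℕ) : toF N p k = k * p.parts.count k := rfl

lemma sum_toF (p : Nat.Partition N) : ∑ k ∈ Finset.Icc 1 N, k * p.parts.count k = N := by
  have h := Finset.sum_multiset_map_count p.parts (id : ℕ → ℕ)
  rw [Multiset.map_id] at h
  have hsub : p.parts.toFinset ⊆ Finset.Icc 1 N := fun j hj =>
    part_mem_Icc N p (Multiset.mem_toFinset.mp hj)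
  have h2 : ∑ m ∈ p.parts.toFinset, p.parts.count m • (id m) =
      ∑ k ∈ Finset.Icc 1 N, k * p.parts.count k := by
    rw [Finset.sum_subset hsub (fun x _ hx => by
      simp [Multiset.count_eq_zero_of_notMem (fun hm => hx (Multiset.mem_toFinset.mpr hm))])]
    exact Finset.sum_congr rfl fun k _ => by simp [mul_comm]
  rw [h2] at h
  rw [← h, p.parts_sum]

end Aux

/-- for `c : ℕ → ℕ` and `N ≥ 1`, the coefficient of `t^N` in the power
series `∏_{k=1}^N ((1 - t^k)⁻¹)^{c k}` over `ℚ` equals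
`∑_{λ ⊢ N} ∏_{k=1}^N C(c k + r_k(λ) - 1, r_k(λ))`, where `r_k(λ)` is the multiplicity of
the part `k` in the partition `λ`. -/
theorem stmt14 (c : ℕ → ℕ) (N : ℕ) (hN : 1 ≤ N) :
    PowerSeries.coeff N
        (∏ k ∈ Finset.Icc 1 N, ((1 - (PowerSeries.X : PowerSeries ℚ) ^ k)⁻¹) ^ (c k)) =
      ∑ p : Nat.Partition N, ∏ k ∈ Finset.Icc 1 N,
        (Nat.choose (c k + p.parts.count k - 1) (p.parts.count k) : ℚ) := by
  classical
  rw [PowerSeries.coeff_prod]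
  rw [Finset.sum_congr rfl (fun l _ => Finset.prod_congr rfl fun k hk => by
    rw [inv_pow_eq k (c k) (Finset.mem_Icc.mp hk).1, coeff_mk])]
  rw [← Finset.sum_filter_of_ne (p := fun l : ℕ →₀ ℕ => ∀ k ∈ Finset.Icc 1 N, k ∣ l k)
    (fun l _ hne k hk => by
      by_contra hd
      exact hne (Finset.prod_eq_zero hk (by simp [pg, hd])))]
  refine (Finset.sum_nbij (toF N) ?_ ?_ ?_ ?_).symm
  · -- membership
    intro p _
    rw [Finset.mem_filter, Finset.mem_finsuppAntidiag]
    refine ⟨⟨?_, Finsupp.support_onFinset_subset⟩, fun k _ => dvd_mul_right k _⟩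
    exact sum_toF N p
  · -- injectivity
    intro p _ q _ h
    refine Nat.Partition.ext (Multiset.ext.mpr fun j => ?_)
    by_cases hj : j ∈ Finset.Icc 1 N
    · have hc := DFunLike.congr_fun h j
      rw [toF_apply, toF_apply] at hc
      have hj1 : 1 ≤ j := (Finset.mem_Icc.mp hj).1
      exact Nat.eq_of_mul_eq_mul_left (by omega) hc
    · rw [count_out N p hj, count_out N q hj]
  · -- surjectivity
    intro l hl
    simp only [Finset.coe_filter, Set.mem_setOf_eq, Finset.mem_finsuppAntidiag] at hl
    obtain ⟨⟨hsum, hsupp⟩, hdvd⟩ := hl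
    refine ⟨⟨∑ k ∈ Finset.Icc 1 N, Multiset.replicate (l k / k) k, ?_, ?_⟩,
      Finset.mem_coe.mpr (Finset.mem_univ _), ?_⟩
    · intro i hi
      rw [Multiset.mem_sum] at hi
      obtain ⟨k, hk, hik⟩ := hi
      rw [Multiset.eq_of_mem_replicate hik]
      exact (Finset.mem_Icc.mp hk).1
    · have hms := map_sum Multiset.sumAddMonoidHom
        (fun k => Multiset.replicate (l k / k) k) (Finset.Icc 1 N)
      simp only [Multiset.coe_sumAddMonoidHom] at hms
      rw [hms]
      simp only [Multiset.sum_replicate, smul_eq_mul]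
      rw [Finset.sum_congr rfl fun k hk => Nat.div_mul_cancel (hdvd k hk)]
      exact hsum
    · ext k
      rw [toF_apply]
      simp only [Multiset.count_sum', Multiset.count_replicate]
      rw [Finset.sum_ite_eq' (Finset.Icc 1 N) k (fun j => l j / j)]
      by_cases hk : k ∈ Finset.Icc 1 N
      · rw [if_pos hk, Nat.mul_div_cancel' (hdvd k hk)]
      · rw [if_neg hk, mul_zero]
        exact (Finsupp.notMem_support_iff.mp (fun hs => hk (hsupp hs))).symm
  · -- terms agree
    intro p _
    refine Finset.prod_congr rfl fun k hk => ?_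
    have hk1 : 1 ≤ k := (Finset.mem_Icc.mp hk).1
    rw [toF_apply]
    simp only [pg, if_pos (dvd_mul_right k _),
      Nat.mul_div_cancel_left _ (by omega : 0 < k)]
end
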